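/- Let V: ℤ → ℝ be bounded by C_V ≥ 1 and suppose the 2×2 transfer matrices A(j) = [[E − V(j), −1],[1, 0]] satisfy ‖A(k+n)⋯A(k+1)‖ ≤ e^{Λn} for all k ∈ ℤ and n ≥ n_0. Let q ≥ n_0, β > Λ, and suppose |V(j) − V(j + q)| ≤ e^{−βq} for all 1 ≤ j ≤ iq for some positive integer i. Then ‖A_q(from position (i−1)q) − A_q(from position 0)‖ ≤ (i−1)·q·C·e^{(Λ−β)q}, where A_q(from position k) = A(k+q)⋯A(k+1) and C depends only on n_0 and C_V. -/

import Mathlib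

open scoped Matrix.Norms.L2Operator

/-- The transfer matrix at energy `E` over the potential `V`. -/
noncomputable def transferMat (V : ℤ → ℝ) (E : ℝ) (j : ℤ) : Matrix (Fin 2) (Fin 2) ℝ :=
  !![E - V j, -1; 1, 0]

/-- The `n`-step transfer matrix starting at position `k`:
`A(k+n) ⋯ A(k+2) A(k+1)`. -/
noncomputable def transferProd (V : ℤ → ℝ) (E : ℝ) (k : ℤ) (n : ℕ) :
    Matrix (Fin 2) (Fin 2) ℝ :=
  (List.ofFn (fun i : Fin n => transferMat V E (k + n - (i : ℕ)))).prod

namespace Stmt18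

abbrev M2 := Matrix (Fin 2) (Fin 2) ℝ

/-- Descending product `f (n-1) * ⋯ * f 0`. -/
noncomputable def dprod (f : ℕ → M2) : ℕ → M2
  | 0 => 1
  | (n+1) => f n * dprod f n

lemma transferProd_succ (V : ℤ → ℝ) (E : ℝ) (k : ℤ) (n : ℕ) :
    transferProd V E k (n+1) = transferMat V E (k + n + 1) * transferProd V E k n := by
  unfold transferProd
  rw [List.ofFn_succ, List.prod_cons]
  congr 1
  · congr 1; simp; push_cast; ring
  · exact congrArg List.prod (congrArg List.ofFn (funext fun i => by
      congr 1; simp [Fin.val_succ]; push_cast; ring))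

lemma dprod_eq (V : ℤ → ℝ) (E : ℝ) (c : ℤ) (n : ℕ) :
    dprod (fun j => transferMat V E (c + 1 + j)) n = transferProd V E c n := by
  induction n with
  | zero => simp [dprod, transferProd]
  | succ n ih =>
    rw [transferProd_succ, dprod, ih]
    congr 2
    ring

lemma dprod_sub_dprod (f g : ℕ → M2) (n : ℕ) :
    dprod f n - dprod g n =
      ∑ j ∈ Finset.range n,
        dprod (fun m => f (j + 1 + m)) (n - (j + 1)) * (f j - g j) * dprod g j := by
  induction n with
  | zero => simp [dprod]
  | succ n ih =>
    rw [Finset.sum_range_succ]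
    have h1 : ∀ j ∈ Finset.range n,
        dprod (fun m => f (j+1+m)) (n+1-(j+1)) * (f j - g j) * dprod g j
          = f n * (dprod (fun m => f (j+1+m)) (n-(j+1)) * (f j - g j) * dprod g j) := by
      intro j hj
      rw [Finset.mem_range] at hj
      have h2 : n + 1 - (j+1) = (n - (j+1)) + 1 := by omega
      have h3 : j + 1 + (n - (j+1)) = n := by omega
      rw [h2]
      show (fun m => f (j+1+m)) (n - (j+1)) * dprod (fun m => f (j+1+m)) (n-(j+1))
          * (f j - g j) * dprod g j = _
      simp only [h3, mul_assoc]
    rw [Finset.sum_congr rfl h1, ← Finset.mul_sum, ← ih]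
    have h0 : n + 1 - (n+1) = 0 := by omega
    rw [h0]
    show f n * dprod f n - g n * dprod g n
        = f n * (dprod f n - dprod g n) + 1 * (f n - g n) * dprod g n
    noncomm_ring

lemma norm_transferProd_le_pow (V : ℤ → ℝ) (E : ℝ) (C_V : ℝ)
    (hA : ∀ j : ℤ, ‖transferMat V E j‖ ≤ C_V) (c : ℤ) (n : ℕ) :
    ‖transferProd V E c n‖ ≤ C_V ^ n := by
  induction n with
  | zero => simp [transferProd]
  | succ n ih =>
    rw [transferProd_succ, pow_succ']
    calc ‖transferMat V E (c+n+1) * transferProd V E c n‖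
        ≤ ‖transferMat V E (c+n+1)‖ * ‖transferProd V E c n‖ := norm_mul_le _ _
      _ ≤ C_V * C_V ^ n := by
          apply mul_le_mul (hA _) ih (norm_nonneg _)
          exact le_trans (norm_nonneg _) (hA 0)

lemma sub_transferMat (V : ℤ → ℝ) (E : ℝ) (a b : ℤ) :
    transferMat V E a - transferMat V E b = (V b - V a) • !![(1:ℝ),0;0,0] := by
  unfold transferMat
  ext i j
  fin_cases i <;> fin_cases j <;> simp <;> ring

end Stmt18

open Stmt18 in
theorem stmt_18 (n₀ : ℕ) (C_V : ℝ) (hCV : 1 ≤ C_V) :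
    ∃ C : ℝ, 0 < C ∧
      ∀ (V : ℤ → ℝ) (E Λ β : ℝ) (q i : ℕ),
        (∀ j : ℤ, ‖transferMat V E j‖ ≤ C_V) →
        (∀ k : ℤ, ∀ n : ℕ, n₀ ≤ n → ‖transferProd V E k n‖ ≤ Real.exp (Λ * n)) →
        0 ≤ Λ → Λ < β → n₀ ≤ q → 1 ≤ i →
        (∀ j : ℕ, 1 ≤ j → j ≤ i * q → |V j - V (j + q)| ≤ Real.exp (-β * q)) →
        ‖transferProd V E (((i : ℤ) - 1) * q) q - transferProd V E 0 q‖ ≤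
          ((i : ℝ) - 1) * q * C * Real.exp ((Λ - β) * q) := by
  set c₀ : ℝ := ‖(!![(1:ℝ),0;0,0] : M2)‖ with hc₀
  have hc₀0 : 0 ≤ c₀ := norm_nonneg _
  have hCV0 : (0:ℝ) < C_V := lt_of_lt_of_le one_pos hCV
  refine ⟨(c₀ + 1) * C_V ^ (2*n₀), by positivity, ?_⟩
  intro V E Λ β q i hA hP hΛ hβ hq hi hV
  obtain ⟨i', rfl⟩ : ∃ i', i = i' + 1 := ⟨i - 1, by omega⟩
  -- uniform bound on products
  have hone : (1:ℝ) ≤ C_V ^ n₀ := one_le_pow₀ hCV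
  have hbound : ∀ (c : ℤ) (m : ℕ), ‖transferProd V E c m‖ ≤ C_V ^ n₀ * Real.exp (Λ * m) := by
    intro c m
    rcases le_or_gt n₀ m with h | h
    · calc ‖transferProd V E c m‖ ≤ Real.exp (Λ * m) := hP c m h
        _ ≤ C_V ^ n₀ * Real.exp (Λ * m) :=
            le_mul_of_one_le_left (Real.exp_pos _).le hone
    · calc ‖transferProd V E c m‖ ≤ C_V ^ m := norm_transferProd_le_pow V E C_V hA c m
        _ ≤ C_V ^ n₀ := pow_le_pow_right₀ hCV h.le
        _ ≤ C_V ^ n₀ * Real.exp (Λ * m) := by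
            apply le_mul_of_one_le_right (by positivity)
            exact Real.one_le_exp (by positivity)
  -- V difference over multiple shifts
  have hVd : ∀ (m a : ℕ), 1 ≤ a → a + m * q ≤ (i'+1) * q →
      |V a - V ((a + m * q : ℕ))| ≤ m * Real.exp (-β * q) := by
    intro m
    induction m with
    | zero => intro a _ _; simp
    | succ m ih =>
      intro a ha h
      have h1 : a + m * q ≤ (i'+1) * q := by
        have : m * q ≤ (m+1) * q := by nlinarith
        omega
      have h2 := hV (a + m * q) (by omega) (by
        have : (m+1) * q = m * q + q := by ring
        omega)
      have e : ((a + m * q : ℕ) : ℤ) + q = ((a + (m+1) * q : ℕ) : ℤ) := by push_cast; ring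
      rw [e] at h2
      have h3 := ih a ha h1
      calc |V a - V ((a + (m+1) * q : ℕ))|
          ≤ |V a - V ((a + m * q : ℕ))| + |V ((a + m * q : ℕ)) - V ((a + (m+1) * q : ℕ))| := by
            have := abs_sub_le (V (a:ℤ)) (V ((a + m * q : ℕ) : ℤ)) (V ((a + (m+1) * q : ℕ) : ℤ))
            exact this
        _ ≤ m * Real.exp (-β * q) + Real.exp (-β * q) := add_le_add h3 h2
        _ = (m+1 : ℕ) * Real.exp (-β * q) := by push_cast; ring
  -- set up the telescoping
  set f : ℕ → M2 := fun j => transferMat V E ((((i'+1:ℕ) : ℤ) - 1) * q + 1 + j) with hf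
  set g : ℕ → M2 := fun j => transferMat V E ((0:ℤ) + 1 + j) with hg
  have e1 : transferProd V E ((((i'+1:ℕ) : ℤ) - 1) * q) q = dprod f q := (dprod_eq V E _ q).symm
  have e2 : transferProd V E 0 q = dprod g q := (dprod_eq V E _ q).symm
  rw [e1, e2, dprod_sub_dprod]
  set B : ℝ := (i' : ℝ) * ((c₀ + 1) * C_V ^ (2*n₀)) * Real.exp ((Λ - β) * q) with hB
  have hterm : ∀ j ∈ Finset.range q,
      ‖dprod (fun m => f (j + 1 + m)) (q - (j + 1)) * (f j - g j) * dprod g j‖ ≤ B := by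
    intro j hj
    rw [Finset.mem_range] at hj
    -- prefix
    have hpre0 : dprod (fun m => f (j + 1 + m)) (q - (j + 1))
        = transferProd V E ((((i'+1:ℕ) : ℤ) - 1) * q + (j+1)) (q - (j+1)) := by
      rw [← dprod_eq V E ((((i'+1:ℕ) : ℤ) - 1) * q + (j+1)) (q - (j+1))]
      exact congrArg (fun h => dprod h (q - (j+1))) (funext fun m => by
        simp only [hf]; congr 1; push_cast; ring)
    have hr : ((q - (j+1) : ℕ) : ℝ) = (q:ℝ) - 1 - j := by
      push_cast [Nat.cast_sub (by omega : j + 1 ≤ q)]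
      ring
    have hpre : ‖dprod (fun m => f (j + 1 + m)) (q - (j + 1))‖
        ≤ C_V ^ n₀ * Real.exp (Λ * ((q:ℝ) - 1 - j)) := by
      rw [hpre0, ← hr]; exact hbound _ _
    -- suffix
    have hsuf : ‖dprod g j‖ ≤ C_V ^ n₀ * Real.exp (Λ * j) := by
      rw [hg, dprod_eq V E 0 j]; exact hbound 0 j
    -- middle
    have hmidV : |V ((0:ℤ) + 1 + j) - V ((((i'+1:ℕ) : ℤ) - 1) * q + 1 + j)|
        ≤ (i' : ℝ) * Real.exp (-β * q) := by
      have h4 := hVd i' (1 + j) (by omega) (by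
        have : (i'+1) * q = q + i' * q := by ring
        have hjq : 1 + j ≤ q := by omega
        omega)
      have ea : ((1 + j : ℕ) : ℤ) = (0:ℤ) + 1 + j := by push_cast; ring
      have eb : ((1 + j + i' * q : ℕ) : ℤ) = (((i'+1:ℕ) : ℤ) - 1) * q + 1 + j := by
        push_cast; ring
      rw [ea, eb] at h4
      exact h4
    have hmid : ‖f j - g j‖ ≤ (c₀ + 1) * ((i' : ℝ) * Real.exp (-β * q)) := by
      rw [hf, hg]
      rw [sub_transferMat]
      rw [norm_smul, Real.norm_eq_abs, ← hc₀]
      calc |V ((0:ℤ) + 1 + j) - V ((((i'+1:ℕ) : ℤ) - 1) * q + 1 + j)| * c₀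
          ≤ ((i' : ℝ) * Real.exp (-β * q)) * c₀ :=
            mul_le_mul_of_nonneg_right hmidV hc₀0
        _ ≤ (c₀ + 1) * ((i' : ℝ) * Real.exp (-β * q)) := by
            have : (0:ℝ) ≤ (i' : ℝ) * Real.exp (-β * q) := by positivity
            nlinarith
    -- combine
    have hexp : Real.exp (Λ * ((q:ℝ) - 1 - j)) * Real.exp (-β * q) * Real.exp (Λ * j)
        ≤ Real.exp ((Λ - β) * q) := by
      rw [← Real.exp_add, ← Real.exp_add]
      apply Real.exp_le_exp.2
      have : Λ * ((q:ℝ) - 1 - j) + -β * q + Λ * j = Λ * q - Λ - β * q := by ring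
      rw [this]
      have : (Λ - β) * (q:ℝ) = Λ * q - β * q := by ring
      rw [this]
      linarith
    calc ‖dprod (fun m => f (j + 1 + m)) (q - (j + 1)) * (f j - g j) * dprod g j‖
        ≤ ‖dprod (fun m => f (j + 1 + m)) (q - (j + 1))‖ * ‖f j - g j‖ * ‖dprod g j‖ :=
          (norm_mul_le _ _).trans
            (mul_le_mul_of_nonneg_right (norm_mul_le _ _) (norm_nonneg _))
      _ ≤ (C_V ^ n₀ * Real.exp (Λ * ((q:ℝ) - 1 - j)))
            * ((c₀ + 1) * ((i' : ℝ) * Real.exp (-β * q)))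
            * (C_V ^ n₀ * Real.exp (Λ * j)) := by
          gcongr <;> positivity
      _ = (i' : ℝ) * ((c₀ + 1) * (C_V ^ n₀ * C_V ^ n₀))
            * (Real.exp (Λ * ((q:ℝ) - 1 - j)) * Real.exp (-β * q) * Real.exp (Λ * j)) := by
          ring
      _ ≤ (i' : ℝ) * ((c₀ + 1) * (C_V ^ n₀ * C_V ^ n₀)) * Real.exp ((Λ - β) * q) := by
          apply mul_le_mul_of_nonneg_left hexp (by positivity)
      _ = B := by rw [hB, two_mul, pow_add]
  calc ‖∑ j ∈ Finset.range q,
        dprod (fun m => f (j + 1 + m)) (q - (j + 1)) * (f j - g j) * dprod g j‖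
      ≤ ∑ j ∈ Finset.range q,
        ‖dprod (fun m => f (j + 1 + m)) (q - (j + 1)) * (f j - g j) * dprod g j‖ :=
        norm_sum_le _ _
    _ ≤ ∑ _j ∈ Finset.range q, B := Finset.sum_le_sum hterm
    _ = q * B := by rw [Finset.sum_const, Finset.card_range, nsmul_eq_mul]
    _ = (((i'+1:ℕ) : ℝ) - 1) * q * ((c₀ + 1) * C_V ^ (2*n₀)) * Real.exp ((Λ - β) * q) := by
        rw [hB]; push_cast; ring
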